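/- Let U_1,…,U_n be independent standard normally distributed real random variables. Then for all η > 0: P( |n^{−1/2} Σ_{i=1}^n (U_i² − 1)| ≥ η ) ≤ 2·exp( −η² / (8(1 + η·n^{−1/2})) ). -/

import Mathlib

open MeasureTheory ProbabilityTheory Real

namespace Stmt16Aux

lemma exp_neg_le {z : ℝ} (hz : 0 ≤ z) : Real.exp (-z) ≤ 1 - z + z ^ 2 / 2 := by
  have h1 : 1 + z + z ^ 2 / 2 ≤ Real.exp z := Real.quadratic_le_exp_of_nonneg hz
  have h2 : Real.exp (-z) * Real.exp z = 1 := by rw [← Real.exp_add]; simp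
  have h3 : 0 < Real.exp (-z) := Real.exp_pos _
  nlinarith [sq_nonneg (z ^ 2), sq_nonneg z, Real.exp_pos z]

lemma exp_le_inv {s : ℝ} (hs : s < 1) : Real.exp s ≤ (1 - s)⁻¹ := by
  have h2 : 0 < 1 - s := by linarith
  have h1 : (1 - s) * Real.exp s ≤ 1 := by
    have h4 : Real.exp (-s) * Real.exp s = 1 := by rw [← Real.exp_add]; simp
    have h5 : -s + 1 ≤ Real.exp (-s) := Real.add_one_le_exp (-s)
    nlinarith [Real.exp_pos s]
  rw [inv_eq_one_div, le_div_iff₀ h2]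
  linarith [h1]

lemma mgf_bound_upper {t : ℝ} (ht : 0 ≤ t) (ht2 : (1 + 2 * t) ^ 2 ≤ 2) :
    Real.exp (-t) * (Real.sqrt (1 - 2 * t))⁻¹ ≤ Real.exp (2 * t ^ 2) := by
  have hpos : 0 < 1 - 2 * t := by nlinarith
  have hs : 0 < Real.sqrt (1 - 2 * t) := Real.sqrt_pos.mpr hpos
  have key : Real.exp (-t - 2 * t ^ 2) ≤ Real.sqrt (1 - 2 * t) := by
    rw [Real.le_sqrt (Real.exp_nonneg _) hpos.le, ← Real.exp_nat_mul]
    have hz : (0:ℝ) ≤ 2 * t + 4 * t ^ 2 := by positivity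
    have h6 : ((2:ℕ) : ℝ) * (-t - 2 * t ^ 2) = -(2 * t + 4 * t ^ 2) := by push_cast; ring
    rw [h6]
    have := exp_neg_le hz
    nlinarith [sq_nonneg t]
  calc Real.exp (-t) * (Real.sqrt (1 - 2 * t))⁻¹
      = Real.exp (-t - 2 * t ^ 2) * Real.exp (2 * t ^ 2) * (Real.sqrt (1 - 2 * t))⁻¹ := by
        rw [← Real.exp_add]; ring_nf
    _ ≤ Real.sqrt (1 - 2 * t) * Real.exp (2 * t ^ 2) * (Real.sqrt (1 - 2 * t))⁻¹ := by
        gcongr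
    _ = Real.exp (2 * t ^ 2) := by field_simp

lemma mgf_bound_lower {t : ℝ} (ht : 0 ≤ t) :
    Real.exp t * (Real.sqrt (1 + 2 * t))⁻¹ ≤ Real.exp (2 * t ^ 2) := by
  have hpos : 0 < 1 + 2 * t := by linarith
  have hs : 0 < Real.sqrt (1 + 2 * t) := Real.sqrt_pos.mpr hpos
  have key : Real.exp (t - 2 * t ^ 2) ≤ Real.sqrt (1 + 2 * t) := by
    rw [Real.le_sqrt (Real.exp_nonneg _) hpos.le, ← Real.exp_nat_mul]
    have h6 : ((2:ℕ) : ℝ) * (t - 2 * t ^ 2) = 2 * t - 4 * t ^ 2 := by push_cast; ring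
    rw [h6]
    have hs1 : 2 * t - 4 * t ^ 2 < 1 := by nlinarith [sq_nonneg (2 * t - 1/2)]
    have h7 := exp_le_inv hs1
    have h8 : 0 < 1 - (2 * t - 4 * t ^ 2) := by linarith
    have h9 : (1 - (2 * t - 4 * t ^ 2))⁻¹ ≤ 1 + 2 * t := by
      rw [inv_eq_one_div, div_le_iff₀ h8]
      nlinarith [pow_nonneg ht 3]
    linarith
  calc Real.exp t * (Real.sqrt (1 + 2 * t))⁻¹
      = Real.exp (t - 2 * t ^ 2) * Real.exp (2 * t ^ 2) * (Real.sqrt (1 + 2 * t))⁻¹ := by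
        rw [← Real.exp_add]; ring_nf
    _ ≤ Real.sqrt (1 + 2 * t) * Real.exp (2 * t ^ 2) * (Real.sqrt (1 + 2 * t))⁻¹ := by gcongr
    _ = Real.exp (2 * t ^ 2) := by field_simp

lemma pdf_mul_eq {t : ℝ} (x : ℝ) :
    gaussianPDFReal 0 1 x * Real.exp (t * (x ^ 2 - 1))
      = ((Real.sqrt (2 * π))⁻¹ * Real.exp (-t)) * Real.exp (-(1/2 - t) * x ^ 2) := by
  have h : gaussianPDFReal 0 1 x = (Real.sqrt (2 * π))⁻¹ * Real.exp (-x ^ 2 / 2) := by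
    simp [gaussianPDFReal]
  rw [h, mul_assoc, ← Real.exp_add, mul_assoc, ← Real.exp_add]
  congr 1
  ring

lemma repr : gaussianReal 0 1
    = volume.withDensity (fun x => ((gaussianPDFReal 0 1 x).toNNReal : ENNReal)) := by
  rw [gaussianReal_of_var_ne_zero 0 one_ne_zero]
  rfl

lemma gauss_exp_integrable {t : ℝ} (ht : t < 1/2) :
    Integrable (fun x : ℝ => Real.exp (t * (x ^ 2 - 1))) (gaussianReal 0 1) := by
  rw [repr, integrable_withDensity_iff_integrable_smul
    ((measurable_gaussianPDFReal 0 1).real_toNNReal)]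
  have hb : (0:ℝ) < 1/2 - t := by linarith
  have : (fun x : ℝ => (gaussianPDFReal 0 1 x).toNNReal • Real.exp (t * (x ^ 2 - 1)))
      = fun x : ℝ => ((Real.sqrt (2 * π))⁻¹ * Real.exp (-t)) * Real.exp (-(1/2 - t) * x ^ 2) := by
    funext x
    rw [NNReal.smul_def, smul_eq_mul, Real.coe_toNNReal _ (gaussianPDFReal_nonneg 0 1 x),
      pdf_mul_eq]
  rw [this]
  exact (integrable_exp_neg_mul_sq hb).const_mul _

lemma gauss_exp_integral {t : ℝ} (ht : t < 1/2) :
    ∫ x, Real.exp (t * (x ^ 2 - 1)) ∂(gaussianReal 0 1)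
      = Real.exp (-t) * (Real.sqrt (1 - 2 * t))⁻¹ := by
  have hb : (0:ℝ) < 1/2 - t := by linarith
  rw [repr, integral_withDensity_eq_integral_smul
    ((measurable_gaussianPDFReal 0 1).real_toNNReal)]
  have h1 : (fun x : ℝ => (gaussianPDFReal 0 1 x).toNNReal • Real.exp (t * (x ^ 2 - 1)))
      = fun x : ℝ => ((Real.sqrt (2 * π))⁻¹ * Real.exp (-t)) * Real.exp (-(1/2 - t) * x ^ 2) := by
    funext x
    rw [NNReal.smul_def, smul_eq_mul, Real.coe_toNNReal _ (gaussianPDFReal_nonneg 0 1 x),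
      pdf_mul_eq]
  rw [h1, integral_const_mul, integral_gaussian]
  have h2 : (Real.sqrt (2 * π))⁻¹ * Real.sqrt (π / (1/2 - t)) = (Real.sqrt (1 - 2 * t))⁻¹ := by
    rw [← Real.sqrt_inv, ← Real.sqrt_mul (by positivity)]
    rw [← Real.sqrt_inv]
    congr 1
    have hπ : π ≠ 0 := Real.pi_ne_zero
    have hbne : (1/2 - t) ≠ 0 := ne_of_gt hb
    refine eq_inv_of_mul_eq_one_left ?_
    calc (2*π)⁻¹ * (π / (1/2 - t)) * (1 - 2*t)
        = (π / π) * ((1/2 - t) / (1/2 - t)) := by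
          rw [div_eq_mul_inv, div_eq_mul_inv, div_eq_mul_inv, mul_inv]
          ring
      _ = 1 := by rw [div_self hπ, div_self hbne, mul_one]
  calc (Real.sqrt (2 * π))⁻¹ * Real.exp (-t) * Real.sqrt (π / (1/2 - t))
      = Real.exp (-t) * ((Real.sqrt (2 * π))⁻¹ * Real.sqrt (π / (1/2 - t))) := by ring
    _ = Real.exp (-t) * (Real.sqrt (1 - 2 * t))⁻¹ := by rw [h2]

variable {Ω : Type} [MeasurableSpace Ω] {P : Measure Ω}

lemma int_exp (X : Ω → ℝ) (hX : Measurable X)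
    (hg : Measure.map X P = gaussianReal 0 1) {t : ℝ} (ht : t < 1/2) :
    Integrable (fun ω => Real.exp (t * (X ω ^ 2 - 1))) P := by
  have h : Integrable (fun x : ℝ => Real.exp (t * (x ^ 2 - 1))) (Measure.map X P) := by
    rw [hg]; exact gauss_exp_integrable ht
  exact (integrable_map_measure
    ((((measurable_id.pow_const 2).sub_const 1).const_mul t).exp.aestronglyMeasurable :
      AEStronglyMeasurable (fun x : ℝ => Real.exp (t * (x ^ 2 - 1))) (Measure.map X P))
    hX.aemeasurable).mp h

lemma mgf_eq (X : Ω → ℝ) (hX : Measurable X)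
    (hg : Measure.map X P = gaussianReal 0 1) {t : ℝ} (ht : t < 1/2) :
    mgf (fun ω => X ω ^ 2 - 1) P t = Real.exp (-t) * (Real.sqrt (1 - 2 * t))⁻¹ := by
  have h : mgf (fun ω => X ω ^ 2 - 1) P t
      = ∫ x, Real.exp (t * (x ^ 2 - 1)) ∂(Measure.map X P) := by
    rw [mgf]
    exact (integral_map hX.aemeasurable
      ((((measurable_id.pow_const 2).sub_const 1).const_mul t).exp.aestronglyMeasurable :
        AEStronglyMeasurable (fun x : ℝ => Real.exp (t * (x ^ 2 - 1))) (Measure.map X P))).symm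
  rw [h, hg]
  exact gauss_exp_integral ht

end Stmt16Aux

open Stmt16Aux

/-- Gaussian deviation inequality for the normalized sum of `U_i² − 1`
(inequality (A.5), from Dahlhaus–Polonik). -/
theorem stmt_16 {Ω : Type} [MeasurableSpace Ω] (P : Measure Ω) [IsProbabilityMeasure P]
    (n : ℕ) (hn : 1 ≤ n) (U : Fin n → Ω → ℝ)
    (hmeas : ∀ i, Measurable (U i))
    (hindep : iIndepFun U P)
    (hgauss : ∀ i, Measure.map (U i) P = gaussianReal 0 1)
    (η : ℝ) (hη : 0 < η) :
    (P {ω | η ≤ |(Real.sqrt n)⁻¹ * ∑ i, ((U i ω) ^ 2 - 1)|}).toReal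
      ≤ 2 * Real.exp (-(η ^ 2) / (8 * (1 + η * (Real.sqrt n)⁻¹))) := by
  classical
  have hn0 : (0:ℝ) < n := by exact_mod_cast Nat.lt_of_lt_of_le Nat.zero_lt_one hn
  have hsq : 0 < Real.sqrt n := Real.sqrt_pos.mpr hn0
  set r : ℝ := η * (Real.sqrt n)⁻¹ with hr
  have hrpos : 0 < r := by positivity
  have hηr : η = r * Real.sqrt n := by rw [hr, mul_assoc, inv_mul_cancel₀ (ne_of_gt hsq), mul_one]
  have hη2 : η ^ 2 = n * r ^ 2 := by
    rw [hηr, mul_pow, Real.sq_sqrt hn0.le]; ring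
  -- the random variables X i = U i ^ 2 - 1 and their sum S
  set X : Fin n → Ω → ℝ := fun i ω => (U i ω) ^ 2 - 1 with hX
  have hXmeas : ∀ i, Measurable (X i) := fun i => ((hmeas i).pow_const 2).sub_const 1
  have hXindep : iIndepFun X P :=
    hindep.comp (g := fun _ : Fin n => fun x : ℝ => x ^ 2 - 1)
      (fun _ => (measurable_id.pow_const 2).sub_const 1)
  set S : Ω → ℝ := ∑ i, X i with hS
  have hSapp : ∀ ω, S ω = ∑ i, ((U i ω) ^ 2 - 1) := fun ω => by
    rw [hS, Finset.sum_apply]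
  set a : ℝ := Real.sqrt n * η with ha
  have hna : a = n * r := by
    rw [ha, hηr, ← mul_assoc, mul_comm (Real.sqrt n) r, mul_assoc, Real.mul_self_sqrt hn0.le]
    ring
  -- the target exponent
  set T : ℝ := -(η ^ 2) / (8 * (1 + η * (Real.sqrt n)⁻¹)) with hT
  have hTr : T = -(n * r ^ 2) / (8 * (1 + r)) := by rw [hT, hη2, hr]
  have h1r : (0:ℝ) < 1 + r := by linarith
  -- generic Chernoff-type bound for exponent t (both tails)
  -- upper tail
  have upper : ∀ t : ℝ, 0 ≤ t → (1 + 2 * t) ^ 2 ≤ 2 →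
      (P {ω | a ≤ S ω}).toReal ≤ Real.exp (-t * a + n * (2 * t ^ 2)) := by
    intro t ht0 ht2
    have ht12 : t < 1/2 := by nlinarith
    have hint : ∀ i ∈ Finset.univ, Integrable (fun ω => Real.exp (t * X i ω)) P := by
      intro i _
      exact int_exp (U i) (hmeas i) (hgauss i) ht12
    have hintS : Integrable (fun ω => Real.exp (t * S ω)) P := by
      rw [hS]
      exact hXindep.integrable_exp_mul_sum hXmeas hint
    have h1 := measure_ge_le_exp_mul_mgf (μ := P) (X := S) a ht0 hintS
    have h2 : mgf S P t = (Real.exp (-t) * (Real.sqrt (1 - 2 * t))⁻¹) ^ n := by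
      rw [hS, hXindep.mgf_sum hXmeas]
      have : ∀ i : Fin n, mgf (X i) P t = Real.exp (-t) * (Real.sqrt (1 - 2 * t))⁻¹ :=
        fun i => mgf_eq (U i) (hmeas i) (hgauss i) ht12
      rw [Finset.prod_congr rfl (fun i _ => this i), Finset.prod_const, Finset.card_univ,
        Fintype.card_fin]
    calc (P {ω | a ≤ S ω}).toReal ≤ Real.exp (-t * a) * mgf S P t := h1
      _ ≤ Real.exp (-t * a) * (Real.exp (2 * t ^ 2)) ^ n := by
          rw [h2]
          exact mul_le_mul_of_nonneg_left
            (pow_le_pow_left₀ (by positivity) (mgf_bound_upper ht0 ht2) n) (Real.exp_nonneg _)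
      _ = Real.exp (-t * a + n * (2 * t ^ 2)) := by
          rw [← Real.exp_nat_mul, ← Real.exp_add]
  -- lower tail
  have lower : ∀ t : ℝ, 0 ≤ t →
      (P {ω | S ω ≤ -a}).toReal ≤ Real.exp (-t * a + n * (2 * t ^ 2)) := by
    intro t ht0
    have hnt12 : -t < 1/2 := by linarith
    have hint : ∀ i ∈ Finset.univ, Integrable (fun ω => Real.exp (-t * X i ω)) P := by
      intro i _
      exact int_exp (U i) (hmeas i) (hgauss i) hnt12
    have hintS : Integrable (fun ω => Real.exp (-t * S ω)) P := by
      rw [hS]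
      exact hXindep.integrable_exp_mul_sum hXmeas hint
    have h1 := measure_le_le_exp_mul_mgf (μ := P) (X := S) (-a) (neg_nonpos.mpr ht0) hintS
    have h2 : mgf S P (-t) = (Real.exp t * (Real.sqrt (1 + 2 * t))⁻¹) ^ n := by
      rw [hS, hXindep.mgf_sum hXmeas]
      have : ∀ i : Fin n, mgf (X i) P (-t) = Real.exp t * (Real.sqrt (1 + 2 * t))⁻¹ := by
        intro i
        have := mgf_eq (U i) (hmeas i) (hgauss i) hnt12
        simpa using this
      rw [Finset.prod_congr rfl (fun i _ => this i), Finset.prod_const, Finset.card_univ,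
        Fintype.card_fin]
    have h3 : -(-t) * (-a) = -t * a := by ring
    calc (P {ω | S ω ≤ -a}).toReal ≤ Real.exp (-(-t) * (-a)) * mgf S P (-t) := h1
      _ = Real.exp (-t * a) * mgf S P (-t) := by rw [h3]
      _ ≤ Real.exp (-t * a) * (Real.exp (2 * t ^ 2)) ^ n := by
          rw [h2]
          exact mul_le_mul_of_nonneg_left
            (pow_le_pow_left₀ (by positivity) (mgf_bound_lower ht0) n) (Real.exp_nonneg _)
      _ = Real.exp (-t * a + n * (2 * t ^ 2)) := by
          rw [← Real.exp_nat_mul, ← Real.exp_add]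
  -- choose t for the upper tail
  have upperT : (P {ω | a ≤ S ω}).toReal ≤ Real.exp T := by
    rcases le_or_gt r (4/5) with hcase | hcase
    · have ht0 : (0:ℝ) ≤ r/4 := by linarith
      have ht2 : (1 + 2 * (r/4)) ^ 2 ≤ 2 := by nlinarith
      refine (upper (r/4) ht0 ht2).trans (Real.exp_le_exp.mpr ?_)
      rw [hTr, hna]
      have heq : -(r/4) * ((n:ℝ)*r) + (n:ℝ)*(2*(r/4)^2) = -((n:ℝ)*r^2)/8 := by ring
      rw [heq, div_le_div_iff₀ (by norm_num) (by positivity)]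
      nlinarith [mul_nonneg (mul_nonneg hn0.le (sq_nonneg r)) hrpos.le]
    · have ht0 : (0:ℝ) ≤ 1/5 := by norm_num
      have ht2 : (1 + 2 * (1/5:ℝ)) ^ 2 ≤ 2 := by norm_num
      refine (upper (1/5) ht0 ht2).trans (Real.exp_le_exp.mpr ?_)
      rw [hTr, hna]
      have heq : -(1/5:ℝ) * ((n:ℝ)*r) + (n:ℝ)*(2*(1/5)^2) = ((n:ℝ)*(2 - 5*r))/25 := by ring
      rw [heq, div_le_div_iff₀ (by norm_num) (by positivity)]
      have hq : (0:ℝ) ≤ 15*r^2 + 24*r - 16 := by nlinarith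
      nlinarith [mul_nonneg hn0.le hq]
  -- lower tail with t = r/4
  have lowerT : (P {ω | S ω ≤ -a}).toReal ≤ Real.exp T := by
    refine (lower (r/4) (by linarith)).trans (Real.exp_le_exp.mpr ?_)
    rw [hTr, hna]
    have heq : -(r/4) * ((n:ℝ)*r) + (n:ℝ)*(2*(r/4)^2) = -((n:ℝ)*r^2)/8 := by ring
    rw [heq, div_le_div_iff₀ (by norm_num) (by positivity)]
    nlinarith [mul_nonneg (mul_nonneg hn0.le (sq_nonneg r)) hrpos.le]
  -- event inclusion and union bound
  have hsub : {ω | η ≤ |(Real.sqrt n)⁻¹ * ∑ i, ((U i ω) ^ 2 - 1)|}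
      ⊆ {ω | a ≤ S ω} ∪ {ω | S ω ≤ -a} := by
    intro ω hω
    simp only [Set.mem_setOf_eq] at hω
    have h1 : a ≤ |S ω| := by
      have h2 : |(Real.sqrt n)⁻¹ * ∑ i, ((U i ω) ^ 2 - 1)|
          = (Real.sqrt n)⁻¹ * |S ω| := by
        rw [abs_mul, abs_of_nonneg (inv_nonneg.mpr hsq.le), hSapp]
      rw [h2] at hω
      have h3 := mul_le_mul_of_nonneg_left hω hsq.le
      rw [← mul_assoc, mul_inv_cancel₀ (ne_of_gt hsq), one_mul] at h3
      exact h3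
    rcases le_abs.mp h1 with h | h
    · exact Or.inl h
    · exact Or.inr (show S ω ≤ -a by linarith)
  have hfin : P {ω | a ≤ S ω} + P {ω | S ω ≤ -a} ≠ ⊤ :=
    ENNReal.add_ne_top.mpr ⟨measure_ne_top _ _, measure_ne_top _ _⟩
  calc (P {ω | η ≤ |(Real.sqrt n)⁻¹ * ∑ i, ((U i ω) ^ 2 - 1)|}).toReal
      ≤ (P {ω | a ≤ S ω} + P {ω | S ω ≤ -a}).toReal :=
        ENNReal.toReal_mono hfin ((measure_mono hsub).trans (measure_union_le _ _))
    _ = (P {ω | a ≤ S ω}).toReal + (P {ω | S ω ≤ -a}).toReal :=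
        ENNReal.toReal_add (measure_ne_top _ _) (measure_ne_top _ _)
    _ ≤ Real.exp T + Real.exp T := add_le_add upperT lowerT
    _ = 2 * Real.exp T := by ring
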